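/- Let A be a central simple algebra over an infinite field F of characteristic not 3 containing a primitive cube root of unity ρ, and let x, y, z ∈ A be 3-central elements (cubes in F^×, themselves noncentral) that are F-linearly independent, with y x = ρ x y, z x = ρ x z, and y z = ρ z y. Then F x + F y + F z is 3-central: every nonzero F-linear combination a x + b y + c z has cube in F. -/
import Mathlib


/-- Acyclic triangle of `3`-central elements: if `x, y, z` are linearly independent
`3`-central elements with `yx = ρ xy`, `zx = ρ xz`, `yz = ρ zy`, then every
`F`-linear combination of `x, y, z` has its cube in `F`. -/
theorem three_central_triangle_acyclic
    {F A : Type*} [Field F] [Infinite F] [Ring A] [Algebra F A]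
    (h3 : (3 : F) ≠ 0) (ρ : F) (hρ : IsPrimitiveRoot ρ 3)
    (hcentral : ∀ a : A, (∀ b : A, a * b = b * a) → ∃ c : F, a = algebraMap F A c)
    (x y z : A) (αx αy αz : F)
    (hx3 : x ^ 3 = algebraMap F A αx) (hy3 : y ^ 3 = algebraMap F A αy)
    (hz3 : z ^ 3 = algebraMap F A αz)
    (hxnc : ∀ s : F, x ≠ algebraMap F A s)
    (hync : ∀ s : F, y ≠ algebraMap F A s)
    (hznc : ∀ s : F, z ≠ algebraMap F A s)
    (hind : LinearIndependent F ![x, y, z])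
    (hyx : y * x = ρ • (x * y)) (hzx : z * x = ρ • (x * z))
    (hyz : y * z = ρ • (z * y)) :
    ∀ a b c : F, ∃ s : F, (a • x + b • y + c • z) ^ 3 = algebraMap F A s := by
  have hρ3 : ρ ^ 3 = 1 := hρ.pow_eq_one
  have hρne : ρ ≠ 1 := hρ.ne_one (by norm_num)
  have hρsum : ρ ^ 2 + ρ + 1 = 0 := by
    have : (ρ - 1) * (ρ ^ 2 + ρ + 1) = 0 := by linear_combination hρ3
    rcases mul_eq_zero.mp this with h | h
    · exact absurd (sub_eq_zero.mp h) hρne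
    · exact h
  have Hyx : ∀ w : A, y * (x * w) = ρ • (x * (y * w)) := fun w => by
    rw [← mul_assoc, hyx, smul_mul_assoc, mul_assoc]
  have Hzx : ∀ w : A, z * (x * w) = ρ • (x * (z * w)) := fun w => by
    rw [← mul_assoc, hzx, smul_mul_assoc, mul_assoc]
  have Hyz : ∀ w : A, y * (z * w) = ρ • (z * (y * w)) := fun w => by
    rw [← mul_assoc, hyz, smul_mul_assoc, mul_assoc]
  have cx : x * (x * x) = algebraMap F A αx := by rw [← hx3, pow_succ, pow_two, ← mul_assoc]
  have cy : y * (y * y) = algebraMap F A αy := by rw [← hy3, pow_succ, pow_two, ← mul_assoc]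
  have cz : z * (z * z) = algebraMap F A αz := by rw [← hz3, pow_succ, pow_two, ← mul_assoc]
  intro a b c
  refine ⟨a ^ 3 * αx + b ^ 3 * αy + c ^ 3 * αz, ?_⟩
  simp only [pow_succ, pow_zero, one_mul, add_mul, mul_add, smul_mul_assoc, mul_smul_comm, smul_smul,
    mul_assoc, hyx, hzx, hyz, Hyx, Hzx, Hyz, smul_add, cx, cy, cz,
    Algebra.algebraMap_eq_smul_one, map_add]
  match_scalars
  all_goals first
    | ring1
    | linear_combination (a * a * b) * hρsum
    | linear_combination (a * a * c) * hρsum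
    | linear_combination (a * b * b) * hρsum
    | linear_combination (a * c * c) * hρsum
    | linear_combination (b * b * c) * hρsum
    | linear_combination (b * c * c) * hρsum
    | linear_combination (a * b * c * (ρ + 1)) * hρsum
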